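/- arXiv:1606.07704 — 2 statements merged into one kernel-verified Lean document; each statement's English description precedes it below -/
import Mathlib

section
/- Let d ≥ 2, τ > 0, let ξ be a real random variable, and let X be a d×d random matrix whose entries are i.i.d. random variables distributed like ξ, with X almost surely invertible. Then E|(X⁻¹)_{1,1}|^τ ≤ sup_{a ∈ ℝ} E|ξ − a|^{−τ}. -/
open MeasureTheory ProbabilityTheory Matrix
open scoped ENNReal

/-- Borel-type measurable structure on matrices, via the product structure on `m → n → α`. -/
instance matrixMeasurableSpace {m n α : Type*} [MeasurableSpace α] :
    MeasurableSpace (Matrix m n α) :=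
  inferInstanceAs (MeasurableSpace (m → n → α))

namespace InvMomentAux

variable {d : ℕ}

noncomputable def cF (i0 : Fin d) (A : Matrix (Fin d) (Fin d) ℝ) : ℝ := A.adjugate i0 i0

noncomputable def rF (i0 : Fin d) (A : Matrix (Fin d) (Fin d) ℝ) : ℝ :=
  ∑ j ∈ Finset.univ.erase i0, A i0 j * A.adjugate j i0

noncomputable def aF (i0 : Fin d) (A : Matrix (Fin d) (Fin d) ℝ) : ℝ :=
  -(rF i0 A) / cF i0 A

lemma det_decomp (i0 : Fin d) (A : Matrix (Fin d) (Fin d) ℝ) :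
    A.det = A i0 i0 * cF i0 A + rF i0 A := by
  have h := congrFun (congrFun (Matrix.mul_adjugate A) i0) i0
  simp only [Matrix.mul_apply, Matrix.smul_apply, Matrix.one_apply_eq, smul_eq_mul, mul_one] at h
  rw [← h, cF, rF, ← Finset.add_sum_erase _ _ (Finset.mem_univ i0)]

lemma inv_apply00 (i0 : Fin d) (A : Matrix (Fin d) (Fin d) ℝ) :
    A⁻¹ i0 i0 = cF i0 A / A.det := by
  rw [Matrix.inv_def, Matrix.smul_apply, Ring.inverse_eq_inv, cF, smul_eq_mul,
    div_eq_inv_mul]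

lemma pointwise {τ : ℝ} (hτ : 0 < τ) (i0 : Fin d) (A : Matrix (Fin d) (Fin d) ℝ)
    (hA : IsUnit A) :
    (ENNReal.ofReal |A⁻¹ i0 i0|) ^ τ ≤ (ENNReal.ofReal |A i0 i0 - aF i0 A|) ^ (-τ) := by
  have hdet : A.det ≠ 0 := by
    have := A.isUnit_iff_isUnit_det.mp hA
    simpa [isUnit_iff_ne_zero] using this
  by_cases hc : cF i0 A = 0
  · rw [inv_apply00, hc]
    simp [ENNReal.zero_rpow_of_pos hτ]
  · have key : A i0 i0 - aF i0 A = A.det / cF i0 A := by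
      rw [aF, det_decomp i0 A]
      field_simp
      ring
    have h1 : |A⁻¹ i0 i0| = |A i0 i0 - aF i0 A|⁻¹ := by
      rw [inv_apply00, key, abs_div, abs_div, inv_div]
    have hpos : 0 < |A i0 i0 - aF i0 A| := by
      rw [key]
      exact abs_pos.mpr (div_ne_zero hdet hc)
    rw [h1, ENNReal.ofReal_inv_of_pos hpos, ENNReal.inv_rpow, ENNReal.rpow_neg]


lemma aF_congr (i0 : Fin d) {A B : Matrix (Fin d) (Fin d) ℝ}
    (h : ∀ p : Fin d × Fin d, p ≠ (i0, i0) → A p.1 p.2 = B p.1 p.2) :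
    aF i0 A = aF i0 B := by
  have hrow : ∀ v : Fin d → ℝ, A.updateRow i0 v = B.updateRow i0 v := by
    intro v
    ext i j
    rcases eq_or_ne i i0 with rfl | hi
    · simp [Matrix.updateRow_self]
    · rw [Matrix.updateRow_ne hi, Matrix.updateRow_ne hi]
      exact h (i, j) (by simp [Prod.ext_iff, hi])
  have hadj : ∀ j, A.adjugate j i0 = B.adjugate j i0 := by
    intro j
    rw [Matrix.adjugate_apply, Matrix.adjugate_apply, hrow]
  have hc : cF i0 A = cF i0 B := hadj i0
  have hr : rF i0 A = rF i0 B := by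
    refine Finset.sum_congr rfl fun j hj => ?_
    rw [hadj j, h (i0, j) (by simp [Prod.ext_iff, Finset.ne_of_mem_erase hj])]
  rw [aF, aF, hc, hr]

section Meas

variable {α : Type*} [MeasurableSpace α] {f : α → Matrix (Fin d) (Fin d) ℝ}

lemma measurable_det' (hf : ∀ i j, Measurable fun a => f a i j) :
    Measurable fun a => (f a).det := by
  simp_rw [Matrix.det_apply']
  exact Finset.measurable_sum _ fun σ _ =>
    (Finset.measurable_prod _ fun i _ => hf _ _).const_mul _

lemma measurable_adjugate' (hf : ∀ i j, Measurable fun a => f a i j) (i j : Fin d) :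
    Measurable fun a => (f a).adjugate i j := by
  simp_rw [Matrix.adjugate_apply]
  refine measurable_det' fun i' j' => ?_
  simp_rw [Matrix.updateRow_apply]
  by_cases h : i' = j <;> simp [h, hf]

lemma measurable_aF (hf : ∀ i j, Measurable fun a => f a i j) (i0 : Fin d) :
    Measurable fun a => aF i0 (f a) := by
  unfold aF rF cF
  exact ((Finset.measurable_sum _ fun j _ =>
    (hf _ _).mul (measurable_adjugate' hf _ _)).neg).div (measurable_adjugate' hf _ _)

end Meas

end InvMomentAux

theorem inverse_entry_negative_moment_le
    {Ω : Type*} [MeasureSpace Ω] [IsProbabilityMeasure (ℙ : Measure Ω)]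
    {d : ℕ} (hd : 2 ≤ d) (τ : ℝ) (hτ : 0 < τ)
    (ξ : Ω → ℝ) (hξ : Measurable ξ)
    (X : Ω → Matrix (Fin d) (Fin d) ℝ) (hX : Measurable X)
    -- the entries of `X` are i.i.d., distributed like `ξ`
    (hent : ∀ i j, Measure.map (fun ω => X ω i j) ℙ = Measure.map ξ ℙ)
    (hiid : iIndepFun
      (fun q : Fin d × Fin d => fun ω => X ω q.1 q.2) ℙ)
    -- `X` is almost surely invertible
    (hinv : ∀ᵐ ω ∂ℙ, IsUnit (X ω)) :
    (∫⁻ ω, (ENNReal.ofReal |(X ω)⁻¹ ⟨0, by omega⟩ ⟨0, by omega⟩|) ^ τ ∂ℙ) ≤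
      ⨆ a : ℝ, ∫⁻ ω, (ENNReal.ofReal |ξ ω - a|) ^ (-τ) ∂ℙ := by
  classical
  have hd0 : 0 < d := by omega
  set i0 : Fin d := ⟨0, hd0⟩ with hi0
  -- entrywise measurability
  have hfm : ∀ q : Fin d × Fin d, Measurable fun ω => X ω q.1 q.2 := fun q =>
    (measurable_pi_apply q.2).comp ((measurable_pi_apply q.1).comp hX)
  -- the index sets
  set S : Finset (Fin d × Fin d) := {(i0, i0)} with hS
  set T : Finset (Fin d × Fin d) := {(i0, i0)}ᶜ with hT
  set Y : Ω → ℝ := fun ω => X ω i0 i0 with hY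
  set Z : Ω → (T → ℝ) := fun ω q => X ω q.1.1 q.1.2 with hZ
  have hYm : Measurable Y := hfm (i0, i0)
  have hZm : Measurable Z := measurable_pi_lambda _ fun q => hfm q.1
  -- independence of Y and Z
  have hindep : IndepFun Y Z ℙ := by
    have h := hiid.indepFun_finset S T (by simp [hS, hT]) hfm
    exact h.comp (measurable_pi_apply (⟨(i0, i0), by simp [hS]⟩ : S)) measurable_id
  have hmap : Measure.map (fun ω => (Y ω, Z ω)) ℙ = (Measure.map Y ℙ).prod (Measure.map Z ℙ) :=
    (indepFun_iff_map_prod_eq_prod_map_map hYm.aemeasurable hZm.aemeasurable).mp hindep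
  -- reconstruction of the matrix from the entries off (i0, i0)
  set recon : (T → ℝ) → Matrix (Fin d) (Fin d) ℝ :=
    fun z i j => if h : (i, j) ∈ T then z ⟨(i, j), h⟩ else 0 with hrecon
  have hreconm : ∀ i j, Measurable fun z : T → ℝ => recon z i j := by
    intro i j
    rw [hrecon]
    by_cases h : (i, j) ∈ T <;> simp only [h, dite_true, dite_false]
    · exact measurable_pi_apply _
    · exact measurable_const
  set atil : (T → ℝ) → ℝ := fun z => InvMomentAux.aF i0 (recon z) with hatil
  have hatilm : Measurable atil := InvMomentAux.measurable_aF hreconm i0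
  have hcongr : ∀ ω, InvMomentAux.aF i0 (X ω) = atil (Z ω) := by
    intro ω
    refine InvMomentAux.aF_congr i0 fun p hp => ?_
    have hpT : (p.1, p.2) ∈ T := by simpa [hT] using hp
    simp [hatil, hrecon, hpT, hZ]
  -- measurability of the pair integrand
  have hFm : Measurable fun p : ℝ × (T → ℝ) =>
      (ENNReal.ofReal |p.1 - atil p.2|) ^ (-τ) :=
    ((measurable_fst.sub (hatilm.comp measurable_snd)).abs.ennreal_ofReal).pow
      measurable_const
  haveI : IsProbabilityMeasure (Measure.map Z ℙ) := Measure.isProbabilityMeasure_map hZm.aemeasurable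
  calc
    (∫⁻ ω, (ENNReal.ofReal |(X ω)⁻¹ ⟨0, by omega⟩ ⟨0, by omega⟩|) ^ τ ∂ℙ)
        ≤ ∫⁻ ω, (ENNReal.ofReal |Y ω - atil (Z ω)|) ^ (-τ) ∂ℙ := by
          refine lintegral_mono_ae (hinv.mono fun ω hω => ?_)
          have h := InvMomentAux.pointwise hτ i0 (X ω) hω
          rwa [hcongr ω] at h
    _ = ∫⁻ p, (ENNReal.ofReal |p.1 - atil p.2|) ^ (-τ)
          ∂((Measure.map Y ℙ).prod (Measure.map Z ℙ)) := by
          rw [← hmap, lintegral_map hFm (hYm.prodMk hZm)]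
    _ = ∫⁻ z, ∫⁻ y, (ENNReal.ofReal |y - atil z|) ^ (-τ) ∂(Measure.map Y ℙ) ∂(Measure.map Z ℙ) :=
          lintegral_prod_symm _ hFm.aemeasurable
    _ ≤ ∫⁻ _, (⨆ a : ℝ, ∫⁻ ω, (ENNReal.ofReal |ξ ω - a|) ^ (-τ) ∂ℙ) ∂(Measure.map Z ℙ) := by
          refine lintegral_mono fun z => ?_
          have hGm : Measurable fun y : ℝ => (ENNReal.ofReal |y - atil z|) ^ (-τ) :=
            ((measurable_id.sub measurable_const).abs.ennreal_ofReal).pow measurable_const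
          have h1 : ∫⁻ y, (ENNReal.ofReal |y - atil z|) ^ (-τ) ∂(Measure.map Y ℙ)
              = ∫⁻ ω, (ENNReal.ofReal |ξ ω - atil z|) ^ (-τ) ∂ℙ := by
            rw [hY, hent i0 i0, lintegral_map hGm hξ]
          rw [h1]
          exact le_iSup (fun a => ∫⁻ ω, (ENNReal.ofReal |ξ ω - a|) ^ (-τ) ∂ℙ) (atil z)
    _ = ⨆ a : ℝ, ∫⁻ ω, (ENNReal.ofReal |ξ ω - a|) ^ (-τ) ∂ℙ := by
          simp [lintegral_const]
end

section
/- Let 0 < ε_1 < ε and 0 < r < 1, and for n ≥ 1 set b_n = √(1 − e^{−2 n^r ε}) and a_n = √(1 − e^{−2 n^r ε_1}). Then 0 ≤ a_n < b_n ≤ 1 for all n ≥ 1, lim_{n→∞} (b_n − a_n)^{1/n} = 1, and Σ_{n=1}^∞ (1 − a_n²)^{β/2} < ∞ for every β > 0. -/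
open Filter

theorem sequences_a_b_properties
    (ε ε₁ r : ℝ) (hε₁ : 0 < ε₁) (hε : ε₁ < ε) (hr0 : 0 < r) (hr1 : r < 1)
    (a b : ℕ → ℝ)
    (ha : ∀ n : ℕ, a n = Real.sqrt (1 - Real.exp (-2 * (n : ℝ) ^ r * ε₁)))
    (hb : ∀ n : ℕ, b n = Real.sqrt (1 - Real.exp (-2 * (n : ℝ) ^ r * ε))) :
    (∀ n : ℕ, 1 ≤ n → 0 ≤ a n ∧ a n < b n ∧ b n ≤ 1) ∧
    Tendsto (fun n : ℕ => (b n - a n) ^ (1 / (n : ℝ))) atTop (nhds 1) ∧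
    ∀ β : ℝ, 0 < β → Summable (fun n : ℕ => (1 - a n ^ 2) ^ (β / 2)) := by
  have hε0 : 0 < ε := hε₁.trans hε
  have hc : (0:ℝ) < ε - ε₁ := by linarith
  -- basic facts
  have hexp_le_one : ∀ (n : ℕ) (t : ℝ), 0 < t → Real.exp (-2 * (n : ℝ) ^ r * t) ≤ 1 := by
    intro n t ht
    rw [Real.exp_le_one_iff]
    have : (0:ℝ) ≤ (n : ℝ) ^ r := Real.rpow_nonneg (Nat.cast_nonneg n) r
    nlinarith
  have harg_nonneg : ∀ (n : ℕ) (t : ℝ), 0 < t →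
      0 ≤ 1 - Real.exp (-2 * (n : ℝ) ^ r * t) := by
    intro n t ht; linarith [hexp_le_one n t ht]
  have hnr_pos : ∀ n : ℕ, 1 ≤ n → (0:ℝ) < (n : ℝ) ^ r := by
    intro n hn
    exact Real.rpow_pos_of_pos (by exact_mod_cast hn) r
  -- part 1
  have part1 : ∀ n : ℕ, 1 ≤ n → 0 ≤ a n ∧ a n < b n ∧ b n ≤ 1 := by
    intro n hn
    have hnr := hnr_pos n hn
    refine ⟨by rw [ha]; exact Real.sqrt_nonneg _, ?_, ?_⟩
    · rw [ha, hb]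
      apply Real.sqrt_lt_sqrt (harg_nonneg n ε₁ hε₁)
      have : Real.exp (-2 * (n : ℝ) ^ r * ε) < Real.exp (-2 * (n : ℝ) ^ r * ε₁) := by
        apply Real.exp_lt_exp.mpr
        nlinarith
      linarith
    · rw [hb, Real.sqrt_le_one]
      linarith [Real.exp_pos (-2 * (n : ℝ) ^ r * ε)]
  refine ⟨part1, ?_, ?_⟩
  · -- part 2
    set c : ℝ := ε - ε₁ with hcdef
    set L : ℕ → ℝ := fun n => c * (n : ℝ) ^ r * Real.exp (-2 * (n : ℝ) ^ r * ε) with hL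
    have hLpos : ∀ n : ℕ, 1 ≤ n → 0 < L n := by
      intro n hn
      exact mul_pos (mul_pos hc (hnr_pos n hn)) (Real.exp_pos _)
    -- lower bound : L n ≤ b n - a n  for n ≥ 1
    have hlow : ∀ n : ℕ, 1 ≤ n → L n ≤ b n - a n := by
      intro n hn
      obtain ⟨ha0, hab, hb1⟩ := part1 n hn
      have hnr := hnr_pos n hn
      have ha1 : a n ≤ 1 := by
        rw [ha, Real.sqrt_le_one]
        linarith [Real.exp_pos (-2 * (n : ℝ) ^ r * ε₁)]
      have hb0 : 0 ≤ b n := le_trans ha0 hab.le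
      have hsq_a : a n ^ 2 = 1 - Real.exp (-2 * (n : ℝ) ^ r * ε₁) := by
        rw [ha, Real.sq_sqrt (harg_nonneg n ε₁ hε₁)]
      have hsq_b : b n ^ 2 = 1 - Real.exp (-2 * (n : ℝ) ^ r * ε) := by
        rw [hb, Real.sq_sqrt (harg_nonneg n ε hε0)]
      -- b² - a² = e^{-x} - e^{-y} ≥ e^{-y}(y-x)  with x = 2n^r ε₁, y = 2n^r ε
      have key : Real.exp (-2 * (n : ℝ) ^ r * ε) * (2 * (n : ℝ) ^ r * (ε - ε₁))
          ≤ b n ^ 2 - a n ^ 2 := by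
        rw [hsq_a, hsq_b]
        have h1 : Real.exp (-2 * (n : ℝ) ^ r * ε₁) - Real.exp (-2 * (n : ℝ) ^ r * ε)
            = Real.exp (-2 * (n : ℝ) ^ r * ε) * (Real.exp (2 * (n : ℝ) ^ r * (ε - ε₁)) - 1) := by
          rw [mul_sub, ← Real.exp_add, mul_one]
          ring_nf
        have h2 : 2 * (n : ℝ) ^ r * (ε - ε₁) + 1 ≤ Real.exp (2 * (n : ℝ) ^ r * (ε - ε₁)) :=
          Real.add_one_le_exp _
        have h3 := (Real.exp_pos (-2 * (n : ℝ) ^ r * ε)).le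
        nlinarith
      have hsum2 : a n + b n ≤ 2 := by linarith
      have hdiff : (b n - a n) * (a n + b n) = b n ^ 2 - a n ^ 2 := by ring
      have hba : 0 ≤ b n - a n := by linarith
      have : b n ^ 2 - a n ^ 2 ≤ (b n - a n) * 2 := by
        rw [← hdiff]
        exact mul_le_mul_of_nonneg_left hsum2 hba
      have : Real.exp (-2 * (n : ℝ) ^ r * ε) * (2 * (n : ℝ) ^ r * (ε - ε₁))
          ≤ (b n - a n) * 2 := le_trans key this
      simp only [hL, hcdef]
      nlinarith
    have hupper : ∀ n : ℕ, 1 ≤ n → b n - a n ≤ 1 := by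
      intro n hn
      obtain ⟨ha0, hab, hb1⟩ := part1 n hn
      linarith
    -- limit of L n ^ (1/n)
    have hg : Tendsto (fun n : ℕ =>
        Real.log c / (n : ℝ) + r * (Real.log (n : ℝ) / (n : ℝ))
          - 2 * ε * ((n : ℝ) ^ r / (n : ℝ))) atTop (nhds 0) := by
      have h1 : Tendsto (fun n : ℕ => Real.log c / (n : ℝ)) atTop (nhds 0) :=
        tendsto_const_div_atTop_nhds_zero_nat _
      have h2 : Tendsto (fun n : ℕ => Real.log (n : ℝ) / (n : ℝ)) atTop (nhds 0) := by
        have := Real.isLittleO_log_id_atTop.tendsto_div_nhds_zero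
        exact this.comp tendsto_natCast_atTop_atTop
      have h3 : Tendsto (fun n : ℕ => (n : ℝ) ^ r / (n : ℝ)) atTop (nhds 0) := by
        have h4 : Tendsto (fun x : ℝ => x ^ (-(1 - r))) atTop (nhds 0) :=
          tendsto_rpow_neg_atTop (by linarith)
        have h5 := h4.comp tendsto_natCast_atTop_atTop
        apply h5.congr'
        filter_upwards [eventually_ge_atTop 1] with n hn
        have hn0 : (0:ℝ) < (n : ℝ) := by exact_mod_cast hn
        simp only [Function.comp]
        rw [show -(1 - r) = r - 1 by ring, Real.rpow_sub hn0, Real.rpow_one]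
      have := (h1.add (h2.const_mul r)).sub (h3.const_mul (2 * ε))
      simpa using this
    have hexp : Tendsto (fun n : ℕ => Real.exp
        (Real.log c / (n : ℝ) + r * (Real.log (n : ℝ) / (n : ℝ))
          - 2 * ε * ((n : ℝ) ^ r / (n : ℝ)))) atTop (nhds 1) := by
      have := (Real.continuous_exp.tendsto 0).comp hg
      simpa [Function.comp_def] using this
    have hLlim : Tendsto (fun n : ℕ => (L n) ^ (1 / (n : ℝ))) atTop (nhds 1) := by
      apply hexp.congr'
      filter_upwards [eventually_ge_atTop 1] with n hn
      have hn0 : (0:ℝ) < (n : ℝ) := by exact_mod_cast hn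
      have hnr := hnr_pos n hn
      rw [Real.rpow_def_of_pos (hLpos n hn)]
      congr 1
      have hlog : Real.log (L n) = Real.log c + r * Real.log (n : ℝ)
          + (-2 * (n : ℝ) ^ r * ε) := by
        simp only [hL]
        rw [Real.log_mul (by positivity) (Real.exp_ne_zero _),
          Real.log_mul (ne_of_gt hc) (ne_of_gt hnr), Real.log_rpow hn0, Real.log_exp]
      rw [hlog]
      field_simp
      ring
    refine tendsto_of_tendsto_of_tendsto_of_le_of_le' hLlim tendsto_const_nhds ?_ ?_
    · filter_upwards [eventually_ge_atTop 1] with n hn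
      have hn0 : (0:ℝ) < (n : ℝ) := by exact_mod_cast hn
      exact Real.rpow_le_rpow (hLpos n hn).le (hlow n hn) (by positivity)
    · filter_upwards [eventually_ge_atTop 1] with n hn
      obtain ⟨ha0, hab, _⟩ := part1 n hn
      have hn0 : (0:ℝ) < (n : ℝ) := by exact_mod_cast hn
      exact Real.rpow_le_one (by linarith) (hupper n hn) (by positivity)
  · -- part 3
    intro β hβ
    have hterm : ∀ n : ℕ, (1 - a n ^ 2) ^ (β / 2)
        = Real.exp (-(β * ε₁) * (n : ℝ) ^ r) := by
      intro n
      have hsq_a : a n ^ 2 = 1 - Real.exp (-2 * (n : ℝ) ^ r * ε₁) := by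
        rw [ha n, Real.sq_sqrt (harg_nonneg n ε₁ hε₁)]
      rw [hsq_a, show (1 : ℝ) - (1 - Real.exp (-2 * (n : ℝ) ^ r * ε₁))
          = Real.exp (-2 * (n : ℝ) ^ r * ε₁) by ring,
        Real.rpow_def_of_pos (Real.exp_pos _), Real.log_exp]
      congr 1
      ring
    rw [funext hterm]
    -- compare with n ^ (-2)
    have hbigO : (fun n : ℕ => Real.exp (-(β * ε₁) * (n : ℝ) ^ r))
        =O[atTop] fun n : ℕ => (n : ℝ) ^ (-2 : ℝ) := by
      have h1 : (fun x : ℝ => Real.exp (-(β * ε₁) * x)) =o[atTop]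
          fun x : ℝ => x ^ (-2 / r) :=
        isLittleO_exp_neg_mul_rpow_atTop (by positivity) _
      have h2 := h1.comp_tendsto
        ((tendsto_rpow_atTop hr0).comp (tendsto_natCast_atTop_atTop (R := ℝ)))
      apply h2.isBigO.congr'
      · exact Eventually.of_forall fun n => rfl
      · filter_upwards [eventually_ge_atTop 1] with n hn
        have hn0 : (0:ℝ) ≤ (n : ℝ) := Nat.cast_nonneg n
        simp only [Function.comp]
        rw [← Real.rpow_mul hn0, mul_div_cancel₀ _ (ne_of_gt hr0)]
    exact summable_of_isBigO_nat (Real.summable_nat_rpow.mpr (by norm_num)) hbigO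
end
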